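/- For every integer n ≥ 0, the common divisor of the binary summands is trivial: G_B(n,x) = 1 in ℤ[x]. -/

import Mathlib

open Polynomial Finset
open scoped Classical

/-- The binary partitions of `n`: partitions of `n` all of whose parts are powers of `2`. -/
noncomputable def binParts (n : ℕ) : Finset (Nat.Partition n) :=
  Finset.univ.filter (fun μ => ∀ i ∈ μ.parts, ∃ k : ℕ, i = 2 ^ k)

/-- `h_{B,λ}(x) = ∏_{k ≥ 0, 2^k ≤ n} (1+x^{2^k})^(⌊n/2^k⌋ - m_λ(2^k))` in `ℤ[x]`. -/
noncomputable def hB (n : ℕ) (μ : Nat.Partition n) : Polynomial ℤ :=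
  ∏ k ∈ (Finset.range (n + 1)).filter (fun k => 2 ^ k ≤ n),
    (1 + X ^ (2 ^ k)) ^ (n / 2 ^ k - μ.parts.count (2 ^ k))

/-- `G_B(n,x)`: the (normalized) gcd of the `h_{B,λ}(x)` over binary partitions `λ` of `n`. -/
noncomputable def GB (n : ℕ) : Polynomial ℤ :=
  (binParts n).gcd (hB n)

theorem GB_dvd_sum (n : ℕ) :
    ∃ q : Polynomial ℤ, (∑ μ ∈ binParts n, hB n μ) = GB n * q :=
  exists_eq_mul_right_of_dvd (Finset.dvd_sum fun _ hμ => Finset.gcd_dvd hμ)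

/-- `num_B(n,x) = (∑_{λ binary partition of n} h_{B,λ}(x)) / G_B(n,x)`. -/
noncomputable def numB (n : ℕ) : Polynomial ℤ :=
  (GB_dvd_sum n).choose

/-- The all-ones partition of `n`. -/
def onesPartition (n : ℕ) : Nat.Partition n :=
  Nat.Partition.ofSums n (Multiset.replicate n 1) (by simp)

theorem onesPartition_mem_binParts (n : ℕ) : onesPartition n ∈ binParts n := by
  simp only [binParts, Finset.mem_filter, Finset.mem_univ, true_and]
  intro i hi
  have h1 : i = 1 := by
    rw [onesPartition, Nat.Partition.ofSums_parts] at hi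
    exact Multiset.eq_of_mem_replicate (Multiset.mem_filter.mp hi).1
  exact ⟨0, by simp [h1]⟩

theorem GB_dvd_prod (n : ℕ) :
    ∃ q : Polynomial ℤ,
      (∏ k ∈ (Finset.range (n + 1)).filter (fun k => 2 ^ k ≤ n),
          ((1 : Polynomial ℤ) + X ^ (2 ^ k)) ^ (n / 2 ^ k)) = GB n * q :=
  exists_eq_mul_right_of_dvd <|
    dvd_trans (Finset.gcd_dvd (onesPartition_mem_binParts n))
      (Finset.prod_dvd_prod_of_dvd _ _ fun _ _ => pow_dvd_pow _ (Nat.sub_le _ _))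

/-- `den_B(n,x) = (∏_{k ≥ 0, 2^k ≤ n} (1+x^{2^k})^⌊n/2^k⌋) / G_B(n,x)`. -/
noncomputable def denB (n : ℕ) : Polynomial ℤ :=
  (GB_dvd_prod n).choose

lemma fB_eq_cyclotomic (k : ℕ) : (1 + X ^ (2^k) : Polynomial ℤ) = cyclotomic (2^(k+1)) ℤ := by
  rw [cyclotomic_prime_pow_eq_geom_sum Nat.prime_two, Finset.sum_range_succ,
    Finset.sum_range_one]
  simp

lemma fB_irreducible (k : ℕ) : Irreducible (1 + X ^ (2^k) : Polynomial ℤ) := by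
  rw [fB_eq_cyclotomic]
  exact cyclotomic.irreducible (by positivity)

lemma fB_monic (k : ℕ) : (1 + X ^ (2^k) : Polynomial ℤ).Monic := by
  rw [add_comm, ← C_1]
  exact monic_X_pow_add_C 1 (by positivity)

lemma fB_natDegree (k : ℕ) : (1 + X ^ (2^k) : Polynomial ℤ).natDegree = 2^k := by
  rw [add_comm, ← C_1]
  exact natDegree_X_pow_add_C

/-- The binary partition of `n` with the maximal number of parts equal to `2^j`. -/
noncomputable def maxPart (n j : ℕ) : Nat.Partition n :=
  Nat.Partition.ofSums n
    (Multiset.replicate (n / 2^j) (2^j) +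
      (((n % 2^j).bitIndices.map (2 ^ ·) : List ℕ) : Multiset ℕ))
    (by
      rw [Multiset.sum_add, Multiset.sum_replicate, Multiset.sum_coe,
        Nat.twoPowSum_bitIndices, smul_eq_mul, mul_comm]
      exact Nat.div_add_mod n (2^j))

lemma maxPart_parts (n j : ℕ) : (maxPart n j).parts =
    Multiset.replicate (n / 2^j) (2^j) +
      (((n % 2^j).bitIndices.map (2 ^ ·) : List ℕ) : Multiset ℕ) := by
  rw [maxPart, Nat.Partition.ofSums_parts, Multiset.filter_eq_self]
  intro i hi
  rw [Multiset.mem_add] at hi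
  rcases hi with hi | hi
  · rw [Multiset.eq_of_mem_replicate hi]; positivity
  · rw [Multiset.mem_coe, List.mem_map] at hi
    obtain ⟨a, -, rfl⟩ := hi
    positivity
lemma maxPart_mem (n j : ℕ) : maxPart n j ∈ binParts n := by
  simp only [binParts, Finset.mem_filter, Finset.mem_univ, true_and]
  intro i hi
  rw [maxPart_parts, Multiset.mem_add] at hi
  rcases hi with hi | hi
  · exact ⟨j, Multiset.eq_of_mem_replicate hi⟩
  · rw [Multiset.mem_coe, List.mem_map] at hi
    obtain ⟨a, -, rfl⟩ := hi
    exact ⟨a, rfl⟩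

lemma maxPart_count (n j : ℕ) : ((maxPart n j).parts).count (2^j) = n / 2^j := by
  rw [maxPart_parts, Multiset.count_add, Multiset.count_replicate_self,
    Multiset.count_eq_zero.2, add_zero]
  intro hmem
  rw [Multiset.mem_coe, List.mem_map] at hmem
  obtain ⟨a, ha, h2⟩ := hmem
  have hle : 2 ^ a ≤ n % 2^j := by
    rw [← Nat.twoPowSum_bitIndices (n % 2^j)]
    exact List.single_le_sum (fun _ _ => Nat.zero_le _) _ (List.mem_map_of_mem ha)
  have := Nat.mod_lt n (show 0 < 2^j by positivity)
  omega

/-- For every integer `n ≥ 0`, the common divisor of the binary summands is trivial: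
`G_B(n,x) = 1` in `ℤ[x]`. -/
theorem GB_eq_one (n : ℕ) : GB n = 1 := by
  have hnorm : normalize (GB n) = GB n := Finset.normalize_gcd
  have hdvd : ∀ μ ∈ binParts n, GB n ∣ hB n μ := fun μ h => Finset.gcd_dvd h
  have hne : GB n ≠ 0 := by
    intro h
    have hd := hdvd _ (onesPartition_mem_binParts n)
    rw [h] at hd
    have hm : (hB n (onesPartition n)).Monic :=
      monic_prod_of_monic _ _ (fun k _ => (fB_monic k).pow _)
    exact hm.ne_zero (eq_zero_of_zero_dvd hd)
  by_contra hne1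
  have hu : ¬ IsUnit (GB n) := fun h => hne1 (by rw [← hnorm, normalize_eq_one.2 h])
  obtain ⟨p, hp_irr, hp_dvd⟩ := WfDvdMonoid.exists_irreducible_factor hu hne
  have hp : Prime p := (UniqueFactorizationMonoid.irreducible_iff_prime).mp hp_irr
  have key : ∀ μ ∈ binParts n, ∃ k,
      μ.parts.count (2^k) < n / 2^k ∧ p ∣ (1 + X ^ (2^k)) := by
    intro μ hμ
    obtain ⟨k, hk, hpk⟩ := hp.exists_mem_finset_dvd (hp_dvd.trans (hdvd μ hμ))
    rcases Nat.eq_zero_or_pos (n / 2^k - μ.parts.count (2^k)) with h0 | hpos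
    · rw [h0, pow_zero] at hpk
      exact absurd (isUnit_of_dvd_one hpk) hp.not_unit
    · exact ⟨k, by omega, hp.dvd_of_dvd_pow hpk⟩
  obtain ⟨k1, -, hpk1⟩ := key _ (onesPartition_mem_binParts n)
  obtain ⟨k2, hlt2, hpk2⟩ := key _ (maxPart_mem n k1)
  have hne12 : k2 ≠ k1 := by
    intro h
    rw [h, maxPart_count] at hlt2
    exact lt_irrefl _ hlt2
  have h3 : Associated (1 + X^(2^k1) : Polynomial ℤ) (1 + X^(2^k2)) :=
    (hp_irr.associated_of_dvd (fB_irreducible k1) hpk1).symm.trans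
      (hp_irr.associated_of_dvd (fB_irreducible k2) hpk2)
  have d1 := Polynomial.natDegree_le_of_dvd h3.dvd (fB_monic k2).ne_zero
  have d2 := Polynomial.natDegree_le_of_dvd h3.symm.dvd (fB_monic k1).ne_zero
  rw [fB_natDegree, fB_natDegree] at d1 d2
  exact hne12 (Nat.pow_right_injective le_rfl (le_antisymm d2 d1))
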